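/- Let M be a topological space and let 𝔅 be a quasipoint of the lattice T(M) of open subsets of M. Then 𝔅^r := {int(closure(U)) : U ∈ 𝔅} is a quasipoint of the lattice T_r(M) of regular open subsets of M. -/

import Mathlib

open TopologicalSpace

theorem regopen_idem {X : Type*} [TopologicalSpace X] (s : Set X) :
    interior (closure (interior (closure s))) = interior (closure s) := by
  apply subset_antisymm
  · apply interior_mono
    calc closure (interior (closure s)) ⊆ closure (closure s) := closure_mono interior_subset
    _ = closure s := closure_closure
  · exact isOpen_interior.subset_interior_closure

/-- The lattice `T_r(M)` of regular open subsets of `M`, ordered by inclusion. -/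
abbrev RegOpen (M : Type*) [TopologicalSpace M] : Type _ :=
  {U : Set M // U = interior (closure U)}

instance {M : Type*} [TopologicalSpace M] : OrderBot (RegOpen M) where
  bot := ⟨∅, by simp⟩
  bot_le U := by exact Set.empty_subset _

/-- The regularization map `U ↦ int(closure U)` from open sets to regular open sets. -/
def Opens.reg {M : Type*} [TopologicalSpace M] (U : Opens M) : RegOpen M :=
  ⟨interior (closure (U : Set M)), (regopen_idem _).symm⟩

/-- A filter base in a partially ordered set `L` with least element `⊥`. -/
def IsFilterBase {L : Type*} [PartialOrder L] [OrderBot L] (B : Set L) : Prop :=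
  B.Nonempty ∧ (⊥ : L) ∉ B ∧ ∀ a ∈ B, ∀ b ∈ B, ∃ c ∈ B, c ≤ a ∧ c ≤ b

/-- A quasipoint of `L`: a maximal filter base. -/
def IsQuasipoint {L : Type*} [PartialOrder L] [OrderBot L] (B : Set L) : Prop :=
  IsFilterBase B ∧ ∀ C : Set L, IsFilterBase C → B ⊆ C → C = B

section Aux

variable {M : Type*} [TopologicalSpace M]

/-- Inclusion of regular open sets into open sets. -/
def RegOpen.toOpens (V : RegOpen M) : Opens M := ⟨V.1, by rw [V.2]; exact isOpen_interior⟩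

lemma RegOpen.le_iff {V W : RegOpen M} : V ≤ W ↔ V.1 ⊆ W.1 := Iff.rfl

lemma RegOpen.bot_val : ((⊥ : RegOpen M)).1 = (∅ : Set M) := rfl

lemma Opens.reg_mono {U V : Opens M} (h : U ≤ V) : Opens.reg U ≤ Opens.reg V :=
  interior_mono (closure_mono h)

lemma Opens.reg_val (U : Opens M) : (Opens.reg U).1 = interior (closure (U : Set M)) := rfl

lemma RegOpen.reg_toOpens (V : RegOpen M) : Opens.reg V.toOpens = V :=
  Subtype.ext V.2.symm

lemma Opens.subset_reg (U : Opens M) : (U : Set M) ⊆ (Opens.reg U).1 :=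
  U.isOpen.subset_interior_closure

lemma Opens.reg_ne_bot {U : Opens M} (hU : U ≠ ⊥) : Opens.reg U ≠ ⊥ := by
  intro h
  apply hU
  apply Opens.ext
  have : (Opens.reg U).1 = (∅ : Set M) := by rw [h]; rfl
  have h2 := Opens.subset_reg U
  rw [this] at h2
  simpa using Set.subset_empty_iff.mp h2

lemma open_inter_nonempty {W U : Set M} (hW : IsOpen W) (hne : W.Nonempty)
    (h : W ⊆ closure U) : (W ∩ U).Nonempty := by
  obtain ⟨x, hx⟩ := hne
  have := h hx
  rw [mem_closure_iff] at this
  exact this W hW hx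

end Aux

/-- If `𝔅` is a quasipoint of the lattice `T(M)` of open sets, then
`𝔅^r = {int(closure U) : U ∈ 𝔅}` is a quasipoint of the lattice `T_r(M)`
of regular open sets. -/
theorem quasipoint_reg_image {M : Type*} [TopologicalSpace M]
    {𝔅 : Set (Opens M)} (h𝔅 : IsQuasipoint 𝔅) :
    IsQuasipoint (Opens.reg '' 𝔅) := by
  obtain ⟨⟨hne, hbot, hdir⟩, hmax⟩ := h𝔅
  constructor
  · refine ⟨hne.image _, ?_, ?_⟩
    · rintro ⟨U, hU, hU'⟩
      exact Opens.reg_ne_bot (fun h => hbot (h ▸ hU)) hU'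
    · rintro _ ⟨a, ha, rfl⟩ _ ⟨b, hb, rfl⟩
      obtain ⟨c, hc, hca, hcb⟩ := hdir a ha b hb
      exact ⟨Opens.reg c, ⟨c, hc, rfl⟩, Opens.reg_mono hca, Opens.reg_mono hcb⟩
  · intro C ⟨hCne, hCbot, hCdir⟩ hsub
    -- Key: for U ∈ 𝔅, V ∈ C, the open set U ⊓ V.toOpens is nonempty.
    have key : ∀ U ∈ 𝔅, ∀ V ∈ C, U ⊓ V.toOpens ≠ ⊥ := by
      intro U hU V hV h
      obtain ⟨W, hW, hWU, hWV⟩ := hCdir (Opens.reg U) (hsub ⟨U, hU, rfl⟩) V hV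
      have hWne : W.1.Nonempty := by
        rcases Set.eq_empty_or_nonempty W.1 with he | hne'
        · exact (hCbot (by rwa [show W = ⊥ from Subtype.ext he] at hW)).elim
        · exact hne'
      have hWcl : W.1 ⊆ closure (U : Set M) := Set.Subset.trans hWU interior_subset
      have hWopen : IsOpen W.1 := by rw [W.2]; exact isOpen_interior
      obtain ⟨x, hxW, hxU⟩ := open_inter_nonempty hWopen hWne hWcl
      have : x ∈ (U ⊓ V.toOpens : Opens M) := ⟨hxU, hWV hxW⟩
      rw [h] at this
      exact this
    -- Enlarge 𝔅 by C and intersections.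
    set D : Set (Opens M) := 𝔅 ∪ {W | ∃ V ∈ C, W = V.toOpens} ∪
      {W | ∃ U ∈ 𝔅, ∃ V ∈ C, W = U ⊓ V.toOpens} with hD
    obtain ⟨V0, hV0⟩ := hCne
    obtain ⟨U0, hU0⟩ := hne
    -- every element of D has below it an element of the third kind
    have core : ∀ a ∈ D, ∃ U ∈ 𝔅, ∃ V ∈ C, U ⊓ V.toOpens ≤ a := by
      rintro a ((ha | ⟨V, hV, rfl⟩) | ⟨U, hU, V, hV, rfl⟩)
      · exact ⟨a, ha, V0, hV0, inf_le_left⟩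
      · exact ⟨U0, hU0, V, hV, inf_le_right⟩
      · exact ⟨U, hU, V, hV, le_refl _⟩
    have hDfb : IsFilterBase D := by
      refine ⟨⟨U0, Or.inl (Or.inl hU0)⟩, ?_, ?_⟩
      · rintro ((h | ⟨V, hV, hV'⟩) | ⟨U, hU, V, hV, h'⟩)
        · exact hbot h
        · apply hCbot
          have : V = ⊥ := Subtype.ext (by
            have : (V.toOpens : Set M) = ((⊥ : Opens M) : Set M) := by rw [← hV']
            simpa [RegOpen.toOpens, RegOpen.bot_val] using this)
          rwa [this] at hV
        · exact key U hU V hV h'.symm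
      · intro a ha b hb
        obtain ⟨Ua, hUa, Va, hVa, hle_a⟩ := core a ha
        obtain ⟨Ub, hUb, Vb, hVb, hle_b⟩ := core b hb
        obtain ⟨U', hU', hU'a, hU'b⟩ := hdir Ua hUa Ub hUb
        obtain ⟨V', hV', hV'a, hV'b⟩ := hCdir Va hVa Vb hVb
        refine ⟨U' ⊓ V'.toOpens, Or.inr ⟨U', hU', V', hV', rfl⟩, ?_, ?_⟩
        · exact le_trans (inf_le_inf hU'a hV'a) hle_a
        · exact le_trans (inf_le_inf hU'b hV'b) hle_b
    have hDeq : D = 𝔅 := hmax D hDfb (fun x hx => Or.inl (Or.inl hx))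
    -- hence every V ∈ C satisfies V.toOpens ∈ 𝔅, so V ∈ reg '' 𝔅
    apply Set.Subset.antisymm _ hsub
    intro V hV
    have : V.toOpens ∈ 𝔅 := by
      rw [← hDeq]; exact Or.inl (Or.inr ⟨V, hV, rfl⟩)
    exact ⟨V.toOpens, this, V.reg_toOpens⟩
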